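/- (Invariance of the total angle.) Let n ≥ 3 and let Δ be a triangulation of [n]. Call an unordered triple {i,j,k} of distinct elements of [n] a triangle of Δ if all pairs among i,j,k belong to Δ. For i ∈ [n], define the total angle T_i^Δ := Σ T_i^{jk}, the sum taken over all unordered pairs {j,k} with j < k such that {i,j,k} is a triangle of Δ. Then T_i^Δ = T_i^{i⁻,i⁺} in 𝒜_n for every i ∈ [n]; in particular T_i^Δ does not depend on the choice of the triangulation Δ. -/

import Mathlib

open scoped Classical

noncomputable section

namespace NCPolygon

/-- Cyclic successor on `Fin n` (the vertices of the `n`-gon in cyclic order). -/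
def csucc {n : ℕ} (i : Fin n) : Fin n :=
  ⟨(i.1 + 1) % n, Nat.mod_lt _ (Nat.lt_of_le_of_lt (Nat.zero_le _) i.isLt)⟩

/-- Cyclic predecessor on `Fin n`. -/
def cpred {n : ℕ} (i : Fin n) : Fin n :=
  ⟨(i.1 + (n - 1)) % n, Nat.mod_lt _ (Nat.lt_of_le_of_lt (Nat.zero_le _) i.isLt)⟩

/-- A list of elements of `Fin n` is *cyclic* if its entries are distinct and some
cyclic rotation of it is strictly increasing. -/
def IsCyclicSeq {n : ℕ} (l : List (Fin n)) : Prop :=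
  l.Nodup ∧ ∃ k : ℕ, (l.rotate k).Pairwise (· < ·)

/-- The pair `(i,k)` crosses `(j,l)` iff `(i,j,k,l)` is cyclic. -/
def Crosses {n : ℕ} (p q : Fin n × Fin n) : Prop :=
  IsCyclicSeq [p.1, q.1, p.2, q.2]

def NonCrossing {n : ℕ} (Δ : Set (Fin n × Fin n)) : Prop :=
  (∀ p ∈ Δ, p.1 ≠ p.2) ∧ ∀ p ∈ Δ, ∀ q ∈ Δ, ¬ Crosses p q

/-- A triangulation of the `n`-gon: a maximal crossing-free set of (directed) chords. -/
def IsTriangulation {n : ℕ} (Δ : Set (Fin n × Fin n)) : Prop :=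
  NonCrossing Δ ∧ ∀ Δ' : Set (Fin n × Fin n), NonCrossing Δ' → Δ ⊆ Δ' → Δ' = Δ

/-! ### The noncommutative polygon algebra `𝒜_n` -/

abbrev OffD (n : ℕ) := {p : Fin n × Fin n // p.1 ≠ p.2}

abbrev AGen (n : ℕ) := OffD n ⊕ OffD n

def xF {n : ℕ} (i j : Fin n) : FreeAlgebra ℚ (AGen n) :=
  if h : i ≠ j then FreeAlgebra.ι ℚ (Sum.inl ⟨(i, j), h⟩) else 1

def xiF {n : ℕ} (i j : Fin n) : FreeAlgebra ℚ (AGen n) :=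
  if h : i ≠ j then FreeAlgebra.ι ℚ (Sum.inr ⟨(i, j), h⟩) else 1

/-- The defining relations of `𝒜_n`: invertibility, triangle, and exchange relations. -/
inductive ARel (n : ℕ) : FreeAlgebra ℚ (AGen n) → FreeAlgebra ℚ (AGen n) → Prop
  | mul_inv {i j : Fin n} (h : i ≠ j) : ARel n (xF i j * xiF i j) 1
  | inv_mul {i j : Fin n} (h : i ≠ j) : ARel n (xiF i j * xF i j) 1
  | triangle {i j k : Fin n} (hij : i ≠ j) (hik : i ≠ k) (hjk : j ≠ k) :
      ARel n (xF i j * xiF k j * xF k i) (xF i k * xiF j k * xF j i)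
  | exchange {i j k l : Fin n} (h : IsCyclicSeq [i, j, k, l]) :
      ARel n (xF j l) (xF j k * xiF i k * xF i l + xF j i * xiF k i * xF k l)

/-- The noncommutative `n`-gon algebra `𝒜_n`. -/
abbrev NCPoly (n : ℕ) := RingQuot (ARel n)

/-- The generator `x_{ij} ∈ 𝒜_n` (junk value `1` when `i = j`). -/
def X {n : ℕ} (i j : Fin n) : NCPoly n :=
  RingQuot.mkAlgHom ℚ (ARel n) (xF i j)

/-- The generator `x_{ij}⁻¹ ∈ 𝒜_n`. -/
def Xinv {n : ℕ} (i j : Fin n) : NCPoly n :=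
  RingQuot.mkAlgHom ℚ (ARel n) (xiF i j)

/-- The noncommutative angle `T_i^{jk} = x_{ji}⁻¹ x_{jk} x_{ik}⁻¹ ∈ 𝒜_n`. -/
def Tang {n : ℕ} (i j k : Fin n) : NCPoly n := Xinv j i * X j k * Xinv i k

/-! ### Triangle groups -/

def tF {n : ℕ} (Δ : Set (Fin n × Fin n)) (i j : Fin n) : FreeGroup Δ :=
  if h : (i, j) ∈ Δ then FreeGroup.of (⟨(i, j), h⟩ : Δ) else 1

/-- The triangle relations of the triangle group `𝕋_Δ`. -/
def triRels {n : ℕ} (Δ : Set (Fin n × Fin n)) : Set (FreeGroup Δ) :=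
  { w | ∃ i j k : Fin n, i ≠ j ∧ i ≠ k ∧ j ≠ k ∧
      (i, j) ∈ Δ ∧ (j, i) ∈ Δ ∧ (i, k) ∈ Δ ∧ (k, i) ∈ Δ ∧ (j, k) ∈ Δ ∧ (k, j) ∈ Δ ∧
      w = tF Δ i j * (tF Δ k j)⁻¹ * tF Δ k i *
        (tF Δ i k * (tF Δ j k)⁻¹ * tF Δ j i)⁻¹ }

/-- The triangle group `𝕋_Δ` of a triangulation `Δ`. -/
abbrev TriGroup {n : ℕ} (Δ : Set (Fin n × Fin n)) := PresentedGroup (triRels Δ)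

/-- The generator `t_{ij} ∈ 𝕋_Δ` (junk value `1` when `(i,j) ∉ Δ`). -/
def tG {n : ℕ} (Δ : Set (Fin n × Fin n)) (i j : Fin n) : TriGroup Δ :=
  if h : (i, j) ∈ Δ then PresentedGroup.of (rels := triRels Δ) ⟨(i, j), h⟩ else 1

/-! ### The big triangle group `𝕋_n` -/

def btF {n : ℕ} (i j : Fin n) : FreeGroup (OffD n) :=
  if h : i ≠ j then FreeGroup.of (⟨(i, j), h⟩ : OffD n) else 1

def bigRels (n : ℕ) : Set (FreeGroup (OffD n)) :=
  { w | ∃ i j k : Fin n, i ≠ j ∧ i ≠ k ∧ j ≠ k ∧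
      w = btF i j * (btF k j)⁻¹ * btF k i * (btF i k * (btF j k)⁻¹ * btF j i)⁻¹ }

/-- The big triangle group `𝕋_n`. -/
abbrev BigTriGroup (n : ℕ) := PresentedGroup (bigRels n)

/-- The generator `t_{ij} ∈ 𝕋_n`. -/
def bigT {n : ℕ} (i j : Fin n) : BigTriGroup n :=
  if h : i ≠ j then PresentedGroup.of (rels := bigRels n) ⟨(i, j), h⟩ else 1

/-! ### Distinguished subalgebras and subgroups -/

/-- `𝒜_Δ`: the subalgebra of `𝒜_n` generated by all `x_{ij}` together with the
`x_{ij}⁻¹` for `(i,j) ∈ Δ`. -/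
def ADelta (n : ℕ) (Δ : Set (Fin n × Fin n)) : Subalgebra ℚ (NCPoly n) :=
  Algebra.adjoin ℚ
    ({a | ∃ i j : Fin n, i ≠ j ∧ a = X i j} ∪ {a | ∃ p ∈ Δ, a = Xinv p.1 p.2})

/-- `𝒬_n`: the subalgebra of `𝒜_n` generated by the `y_{ij}^k = x_{ki}⁻¹ x_{kj}`. -/
def Qn (n : ℕ) : Subalgebra ℚ (NCPoly n) :=
  Algebra.adjoin ℚ
    {a : NCPoly n | ∃ i j k : Fin n, i ≠ j ∧ i ≠ k ∧ j ≠ k ∧ a = Xinv k i * X k j}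

/-- `𝕌_Δ`: the subgroup of `𝕋_Δ` generated by the `u_{ij}^k = t_{ki}⁻¹ t_{kj}`. -/
def UDelta {n : ℕ} (Δ : Set (Fin n × Fin n)) : Subgroup (TriGroup Δ) :=
  Subgroup.closure
    {g | ∃ i j k : Fin n, (k, i) ∈ Δ ∧ (k, j) ∈ Δ ∧ g = (tG Δ k i)⁻¹ * tG Δ k j}



/-! ### Auxiliary machinery for Statement 11 -/

def Cyc4 (A B C D : ℕ) : Prop :=
  (A<B∧B<C∧C<D) ∨ (B<C∧C<D∧D<A) ∨ (C<D∧D<A∧A<B) ∨ (D<A∧A<B∧B<C)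

lemma rot0 {n : ℕ} (a b c d : Fin n) : ([a,b,c,d] : List (Fin n)).rotate 0 = [a,b,c,d] := by
  simp
lemma rot1 {n : ℕ} (a b c d : Fin n) : ([a,b,c,d] : List (Fin n)).rotate 1 = [b,c,d,a] := by
  simp [List.rotate_cons_succ]
lemma rot2 {n : ℕ} (a b c d : Fin n) : ([a,b,c,d] : List (Fin n)).rotate 2 = [c,d,a,b] := by
  simp [List.rotate_cons_succ]
lemma rot3 {n : ℕ} (a b c d : Fin n) : ([a,b,c,d] : List (Fin n)).rotate 3 = [d,a,b,c] := by
  simp [List.rotate_cons_succ]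

theorem sorted4 {n:ℕ} {a b c d : Fin n} :
    List.Pairwise (·<·) [a,b,c,d] ↔ a.val<b.val ∧ b.val<c.val ∧ c.val<d.val := by
  simp only [List.pairwise_cons, List.mem_cons, List.not_mem_nil, or_false, List.Pairwise.nil,
    and_true, Fin.lt_def, forall_eq_or_imp, forall_eq, false_implies, implies_true]
  omega

theorem nodup4 {n:ℕ} {a b c d : Fin n} : ([a,b,c,d] : List (Fin n)).Nodup ↔
    (a.val≠b.val ∧ a.val≠c.val ∧ a.val≠d.val ∧ b.val≠c.val ∧ b.val≠d.val ∧ c.val≠d.val) := by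
  simp only [List.nodup_cons, List.mem_cons, List.not_mem_nil, or_false, not_or,
    List.nodup_nil, and_true, Ne, Fin.ext_iff]
  tauto

lemma sub_val {n : ℕ} (a v : Fin n) :
    ((a - v).val = a.val - v.val ∧ v.val ≤ a.val) ∨
    ((a - v).val = a.val + n - v.val ∧ a.val < v.val) := by
  have ha := a.isLt; have hv := v.isLt
  rw [Fin.sub_def]
  simp only
  rcases le_or_gt v.val a.val with h | h
  · left
    refine ⟨?_, h⟩
    have h1 : n - v.val + a.val = n + (a.val - v.val) := by omega
    rw [h1, Nat.add_mod_left, Nat.mod_eq_of_lt (by omega)]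
  · right
    refine ⟨?_, h⟩
    rw [Nat.mod_eq_of_lt (by omega)]
    omega

theorem cyc4_val {n : ℕ} (a b c d : Fin n) :
    IsCyclicSeq [a,b,c,d] ↔ Cyc4 a.val b.val c.val d.val := by
  constructor
  · rintro ⟨hnd, k, hs⟩
    have hmod : ([a,b,c,d] : List (Fin n)).rotate (k % 4) = [a,b,c,d].rotate k := by
      have := List.rotate_mod ([a,b,c,d] : List (Fin n)) k
      simpa using this
    rw [← hmod] at hs
    have h4 : k % 4 < 4 := Nat.mod_lt _ (by norm_num)
    set m := k % 4 with hm
    clear_value m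
    unfold Cyc4
    interval_cases m
    · rw [rot0, sorted4] at hs; omega
    · rw [rot1, sorted4] at hs; omega
    · rw [rot2, sorted4] at hs; omega
    · rw [rot3, sorted4] at hs; omega
  · intro h
    have hnd : ([a,b,c,d] : List (Fin n)).Nodup := by
      rw [nodup4]; unfold Cyc4 at h; omega
    refine ⟨hnd, ?_⟩
    unfold Cyc4 at h
    rcases h with h | h | h | h
    · exact ⟨0, by rw [rot0, sorted4]; omega⟩
    · exact ⟨1, by rw [rot1, sorted4]; omega⟩
    · exact ⟨2, by rw [rot2, sorted4]; omega⟩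
    · exact ⟨3, by rw [rot3, sorted4]; omega⟩

lemma sub_val' {n : ℕ} (a v : Fin n) :
    (a - v).val + v.val = a.val ∨ (a - v).val + v.val = a.val + n := by
  rcases sub_val a v with ⟨h, h'⟩ | ⟨h, h'⟩
  · left; omega
  · right; have := a.isLt; have := v.isLt; omega

set_option maxHeartbeats 1000000 in
theorem cyc4_anchor {n : ℕ} (v a b c d : Fin n) :
    IsCyclicSeq [a,b,c,d] ↔ Cyc4 (a-v).val (b-v).val (c-v).val (d-v).val := by
  rw [cyc4_val]
  have ha := a.isLt; have hb := b.isLt; have hc := c.isLt; have hd := d.isLt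
  have ha' := (a-v).isLt; have hb' := (b-v).isLt
  have hc' := (c-v).isLt; have hd' := (d-v).isLt
  have h1 := sub_val' a v; have h2 := sub_val' b v
  have h3 := sub_val' c v; have h4 := sub_val' d v
  unfold Cyc4
  rcases h1 with h1 | h1 <;> rcases h2 with h2 | h2 <;> rcases h3 with h3 | h3 <;>
    rcases h4 with h4 | h4 <;> omega

/-! ### algebra lemmas -/

lemma X_mul_Xinv {n : ℕ} {i j : Fin n} (h : i ≠ j) : X i j * Xinv i j = 1 := by
  rw [X, Xinv, ← map_mul, ← map_one (RingQuot.mkAlgHom ℚ (ARel n))]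
  exact RingQuot.mkAlgHom_rel ℚ (ARel.mul_inv h)

lemma Xinv_mul_X {n : ℕ} {i j : Fin n} (h : i ≠ j) : Xinv i j * X i j = 1 := by
  rw [X, Xinv, ← map_mul, ← map_one (RingQuot.mkAlgHom ℚ (ARel n))]
  exact RingQuot.mkAlgHom_rel ℚ (ARel.inv_mul h)

lemma X_triangle {n : ℕ} {i j k : Fin n} (hij : i ≠ j) (hik : i ≠ k) (hjk : j ≠ k) :
    X i j * Xinv k j * X k i = X i k * Xinv j k * X j i := by
  rw [X, X, X, X, Xinv, Xinv, ← map_mul, ← map_mul, ← map_mul, ← map_mul]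
  exact RingQuot.mkAlgHom_rel ℚ (ARel.triangle hij hik hjk)

lemma X_exchange {n : ℕ} {i j k l : Fin n} (h : IsCyclicSeq [i, j, k, l]) :
    X j l = X j k * Xinv i k * X i l + X j i * Xinv k i * X k l := by
  rw [X, X, X, X, X, Xinv, Xinv, ← map_mul, ← map_mul, ← map_mul, ← map_mul, ← map_add]
  exact RingQuot.mkAlgHom_rel ℚ (ARel.exchange h)

lemma tang_symm {n : ℕ} {i j k : Fin n} (hij : i ≠ j) (hik : i ≠ k) (hjk : j ≠ k) :
    Tang i j k = Tang i k j := by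
  have h1 : X j i * Xinv k i * X k j = X j k * Xinv i k * X i j :=
    X_triangle (Ne.symm hij) hjk hik
  have h2 : Xinv j i * (X j i * Xinv k i * X k j) * Xinv i j
      = Xinv j i * (X j k * Xinv i k * X i j) * Xinv i j := by rw [h1]
  calc Tang i j k = Xinv j i * X j k * Xinv i k * (X i j * Xinv i j) := by
        rw [X_mul_Xinv hij, mul_one, Tang]
    _ = Xinv j i * (X j k * Xinv i k * X i j) * Xinv i j := by noncomm_ring
    _ = Xinv j i * (X j i * Xinv k i * X k j) * Xinv i j := h2.symm
    _ = (Xinv j i * X j i) * (Xinv k i * X k j * Xinv i j) := by noncomm_ring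
    _ = Tang i k j := by rw [Xinv_mul_X (Ne.symm hij), one_mul, Tang]

lemma nodup4' {n:ℕ} {a b c d : Fin n} (h : ([a,b,c,d] : List (Fin n)).Nodup) :
    a ≠ b ∧ a ≠ c ∧ a ≠ d ∧ b ≠ c ∧ b ≠ d ∧ c ≠ d := by
  simp only [List.nodup_cons, List.mem_cons, List.not_mem_nil, or_false, not_or,
    List.nodup_nil, and_true] at h
  tauto

lemma tang_add {n : ℕ} {i j k l : Fin n} (h : IsCyclicSeq [i, j, k, l]) :
    Tang i j l = Tang i j k + Tang i k l := by
  obtain ⟨hij, hik, hil, hjk, hjl, hkl⟩ := nodup4' h.1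
  have he := X_exchange h
  calc Tang i j l = Xinv j i * X j l * Xinv i l := rfl
    _ = Xinv j i * (X j k * Xinv i k * X i l + X j i * Xinv k i * X k l) * Xinv i l := by
        rw [← he]
    _ = Xinv j i * X j k * Xinv i k * (X i l * Xinv i l)
        + (Xinv j i * X j i) * (Xinv k i * X k l * Xinv i l) := by noncomm_ring
    _ = Tang i j k + Tang i k l := by
        rw [X_mul_Xinv hil, Xinv_mul_X (Ne.symm hij), mul_one, one_mul, Tang, Tang]

/-! ### cyclic coordinates around a vertex -/

open Fin.NatCast

def io {n : ℕ} [NeZero n] (i : Fin n) (m : ℕ) : Fin n := i + (m : Fin n)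
def rr {n : ℕ} (i x : Fin n) : ℕ := (x - i).val

lemma rr_lt {n : ℕ} (i x : Fin n) : rr i x < n := (x - i).isLt

lemma rr_io {n : ℕ} [NeZero n] (i : Fin n) {m : ℕ} (hm : m < n) : rr i (io i m) = m := by
  rw [rr, io, add_sub_cancel_left, Fin.val_natCast, Nat.mod_eq_of_lt hm]

lemma io_rr {n : ℕ} [NeZero n] (i x : Fin n) : io i (rr i x) = x := by
  rw [io, rr, Fin.cast_val_eq_self]
  abel

lemma rr_inj {n : ℕ} [NeZero n] {i x y : Fin n} (h : rr i x = rr i y) : x = y := by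
  rw [← io_rr (n := n) i x, ← io_rr (n := n) i y, h]

lemma rr_self {n : ℕ} [NeZero n] (i : Fin n) : rr i i = 0 := by
  rw [rr, sub_self, Fin.val_zero]

lemma rr_eq_zero {n : ℕ} [NeZero n] {i x : Fin n} (h : rr i x = 0) : x = i :=
  rr_inj (by rw [h, rr_self])

lemma crosses_iff {n : ℕ} (i : Fin n) (p q : Fin n × Fin n) :
    Crosses p q ↔ Cyc4 (rr i p.1) (rr i q.1) (rr i p.2) (rr i q.2) := by
  unfold Crosses rr
  exact cyc4_anchor i _ _ _ _

lemma isCyclicSeq_iff_rr {n : ℕ} (i a b c d : Fin n) :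
    IsCyclicSeq [a,b,c,d] ↔ Cyc4 (rr i a) (rr i b) (rr i c) (rr i d) :=
  cyc4_anchor i a b c d

/-! ### maximality arguments -/

lemma ext_subset {n : ℕ} {Δ : Set (Fin n × Fin n)} (hΔ : IsTriangulation Δ)
    (E : Set (Fin n × Fin n)) (h1 : ∀ p ∈ E, p.1 ≠ p.2)
    (h2 : ∀ p ∈ E, ∀ q, (q ∈ Δ ∨ q ∈ E) → ¬ Crosses p q ∧ ¬ Crosses q p) :
    E ⊆ Δ := by
  have hnc : NonCrossing (Δ ∪ E) := by
    constructor
    · rintro p (hp | hp)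
      · exact hΔ.1.1 p hp
      · exact h1 p hp
    · rintro p (hp | hp) q (hq | hq)
      · exact hΔ.1.2 p hp q hq
      · exact (h2 q hq p (Or.inl hp)).2
      · exact (h2 p hp q (Or.inl hq)).1
      · exact (h2 p hp q (Or.inr hq)).1
  have heq := hΔ.2 _ hnc Set.subset_union_left
  intro p hp
  rw [← heq]
  exact Or.inr hp

lemma mem_symm {n : ℕ} {Δ : Set (Fin n × Fin n)} (hΔ : IsTriangulation Δ)
    {a b : Fin n} (h : (a, b) ∈ Δ) : (b, a) ∈ Δ := by
  refine ext_subset hΔ {(b, a)} ?_ ?_ rfl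
  · rintro p rfl
    exact (hΔ.1.1 (a, b) h).symm
  · rintro p rfl q hq
    rcases hq with hq | rfl
    · have h1 := hΔ.1.2 (a, b) h q hq
      have h2 := hΔ.1.2 q hq (a, b) h
      rw [crosses_iff a] at h1 h2
      constructor <;> intro hc <;> rw [crosses_iff a] at hc <;>
        unfold Cyc4 at * <;> simp only at * <;> omega
    · constructor <;> intro hc <;> rw [crosses_iff a] at hc <;>
        unfold Cyc4 at hc <;> simp only at hc <;> omega

lemma boundary {n : ℕ} [NeZero n] {Δ : Set (Fin n × Fin n)} (hn : 3 ≤ n)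
    (hΔ : IsTriangulation Δ) (i : Fin n) : (i, io i 1) ∈ Δ ∧ (i, io i (n-1)) ∈ Δ := by
  have h0 : 0 < n := by omega
  have r0 : rr i i = 0 := rr_self i
  have r1 : rr i (io i 1) = 1 := rr_io i (by omega)
  have rn : rr i (io i (n-1)) = n - 1 := rr_io i (by omega)
  have d1 : i ≠ io i 1 := by
    intro h; have := congrArg (rr i) h; rw [r0, r1] at this; omega
  have d2 : i ≠ io i (n-1) := by
    intro h; have := congrArg (rr i) h; rw [r0, rn] at this; omega
  have hsub : ({(i, io i 1), (io i 1, i), (i, io i (n-1)), (io i (n-1), i)} : Set (Fin n × Fin n)) ⊆ Δ := by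
    apply ext_subset hΔ
    · rintro p (rfl | rfl | rfl | rfl)
      · exact d1
      · exact d1.symm
      · exact d2
      · exact d2.symm
    · rintro p hp q _
      have b1 := rr_lt i q.1
      have b2 := rr_lt i q.2
      rcases hp with rfl | rfl | rfl | rfl <;>
        constructor <;> intro hc <;> rw [crosses_iff i] at hc <;>
        simp only [r0, r1, rn] at hc <;> unfold Cyc4 at hc <;> omega
  refine ⟨hsub ?_, hsub ?_⟩ <;> simp

lemma consec_edge {n : ℕ} [NeZero n] {Δ : Set (Fin n × Fin n)} (hn : 3 ≤ n)
    (hΔ : IsTriangulation Δ)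
    (i : Fin n) {a b : ℕ} (ha1 : 1 ≤ a) (hb2 : b ≤ n - 1) (hab : a < b)
    (hia : (i, io i a) ∈ Δ) (hib : (i, io i b) ∈ Δ)
    (hcons : ∀ c, 1 ≤ c → c ≤ n - 1 → (i, io i c) ∈ Δ → ¬(a < c ∧ c < b)) :
    (io i a, io i b) ∈ Δ := by
  have h0 : 0 < n := by omega
  have r0 : rr i i = 0 := rr_self i
  have hra : rr i (io i a) = a := rr_io i (by omega)
  have hrb : rr i (io i b) = b := rr_io i (by omega)
  have inside : ∀ e f : Fin n, (e, f) ∈ Δ →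
      (rr i e ≤ a ∨ b ≤ rr i e) ∨ (a ≤ rr i f ∧ rr i f ≤ b) := by
    intro e f hef
    by_cases h1 : a < rr i e ∧ rr i e < b
    swap
    · left; omega
    right
    constructor
    · by_contra hf
      push_neg at hf
      rcases Nat.eq_zero_or_pos (rr i f) with hf0 | hf0
      · have hfi : f = i := rr_eq_zero hf0
        rw [hfi] at hef
        have hmem : (i, io i (rr i e)) ∈ Δ := by
          rw [io_rr]; exact mem_symm hΔ hef
        exact hcons (rr i e) (by omega) (by have := rr_lt i e; omega) hmem ⟨h1.1, h1.2⟩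
      · have hfe : (f, e) ∈ Δ := mem_symm hΔ hef
        apply hΔ.1.2 (i, io i a) hia (f, e) hfe
        rw [crosses_iff i]
        simp only [r0, hra]
        unfold Cyc4
        omega
    · by_contra hf
      push_neg at hf
      apply hΔ.1.2 (i, io i b) hib (e, f) hef
      rw [crosses_iff i]
      simp only [r0, hrb]
      unfold Cyc4
      omega
  have hsub : ({(io i a, io i b), (io i b, io i a)} : Set (Fin n × Fin n)) ⊆ Δ := by
    have hne : io i a ≠ io i b := by
      intro h; have := congrArg (rr i) h; rw [hra, hrb] at this; omega
    apply ext_subset hΔ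
    · rintro p (rfl | rfl)
      · exact hne
      · exact hne.symm
    · rintro p hp q hq
      rcases hq with hq | hq
      · have hq1 : (q.1, q.2) ∈ Δ := by simpa using hq
        have hq2 : (q.2, q.1) ∈ Δ := mem_symm hΔ hq1
        have I1 := inside q.1 q.2 hq1
        have I2 := inside q.2 q.1 hq2
        have b1 := rr_lt i q.1
        have b2 := rr_lt i q.2
        rcases hp with rfl | rfl <;>
          constructor <;> intro hc <;> rw [crosses_iff i] at hc <;>
          simp only [hra, hrb] at hc <;> unfold Cyc4 at hc <;> omega
      · rcases hp with rfl | rfl <;> rcases hq with rfl | rfl <;>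
          constructor <;> intro hc <;> rw [crosses_iff i] at hc <;>
          simp only [hra, hrb] at hc <;> unfold Cyc4 at hc <;> omega
  exact hsub (by simp)

lemma tri_consec {n : ℕ} [NeZero n] {Δ : Set (Fin n × Fin n)} (hΔ : IsTriangulation Δ)
    {i j k : Fin n} (hij : (i, j) ∈ Δ) (hjk : (j, k) ∈ Δ) {m : ℕ} (hm : m < n)
    (h1 : (i, io i m) ∈ Δ) (h2 : rr i j < m) (h3 : m < rr i k) : False := by
  have r0 : rr i i = 0 := rr_self i
  have hrm : rr i (io i m) = m := rr_io i hm
  have hj0 : rr i j ≠ 0 := fun h => (hΔ.1.1 (i, j) hij) (rr_eq_zero h).symm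
  apply hΔ.1.2 (j, k) hjk (io i m, i) (mem_symm hΔ h1)
  rw [crosses_iff i]
  simp only [r0, hrm]
  unfold Cyc4
  omega

/-! ### telescoping sums -/

def CP (s : Finset ℕ) : Finset (ℕ × ℕ) :=
  (s ×ˢ s).filter (fun q => q.1 < q.2 ∧ ∀ c ∈ s, ¬(q.1 < c ∧ c < q.2))

lemma telescope {M : Type*} [AddCommMonoid M] (g : ℕ → ℕ → M) (N : ℕ)
    (hg : ∀ a b c : ℕ, 1 ≤ a → a < b → b < c → c ≤ N → g a c = g a b + g b c) :
    ∀ (cardv : ℕ) (s : Finset ℕ), s.card = cardv → (∀ x ∈ s, 1 ≤ x ∧ x ≤ N) →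
    ∀ a b, a ∈ s → b ∈ s → (∀ x ∈ s, a ≤ x) → (∀ x ∈ s, x ≤ b) → a < b →
    (∑ q ∈ CP s, g q.1 q.2) = g a b := by
  intro cardv
  induction cardv using Nat.strong_induction_on with
  | _ cardv ih =>
    intro s hcard hbound a b ha hb hmin hmax hab
    classical
    have hbne : b ∈ s.erase a := Finset.mem_erase.2 ⟨by omega, hb⟩
    have hne : (s.erase a).Nonempty := ⟨b, hbne⟩
    set c := (s.erase a).min' hne with hcdef
    have hcs : c ∈ s.erase a := Finset.min'_mem _ _
    have hcmem : c ∈ s := (Finset.mem_erase.1 hcs).2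
    have hca : a < c := lt_of_le_of_ne (hmin c hcmem) (Ne.symm (Finset.mem_erase.1 hcs).1)
    have hcmin : ∀ x ∈ s, x ≠ a → c ≤ x := fun x hx hxa =>
      Finset.min'_le _ _ (Finset.mem_erase.2 ⟨hxa, hx⟩)
    by_cases hcb : c = b
    · have hs2 : ∀ x ∈ s, x = a ∨ x = b := by
        intro x hx
        rcases eq_or_ne x a with rfl | hxa
        · exact Or.inl rfl
        · have := hcmin x hx hxa
          have := hmax x hx
          omega
      have hCP : CP s = {(a, b)} := by
        ext q
        simp only [CP, Finset.mem_filter, Finset.mem_product, Finset.mem_singleton]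
        constructor
        · rintro ⟨⟨hq1, hq2⟩, hlt, _⟩
          rw [Prod.ext_iff]
          rcases hs2 q.1 hq1 with h | h <;> rcases hs2 q.2 hq2 with h' | h' <;> omega
        · intro h
          subst h
          refine ⟨⟨ha, hb⟩, hab, ?_⟩
          intro x hx
          rcases hs2 x hx with rfl | rfl <;> omega
      rw [hCP, Finset.sum_singleton]
    · have hcb' : c < b := lt_of_le_of_ne (hmax c hcmem) hcb
      have hinsert : CP s = insert (a, c) (CP (s.erase a)) := by
        ext q
        simp only [CP, Finset.mem_filter, Finset.mem_product, Finset.mem_insert,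
          Finset.mem_erase]
        constructor
        · rintro ⟨⟨hq1, hq2⟩, hlt, hmid⟩
          rcases eq_or_ne q.1 a with h1a | h1a
          · left
            have h2a : q.2 ≠ a := by omega
            have hc2 := hcmin q.2 hq2 h2a
            have hmc := hmid c hcmem
            rw [Prod.ext_iff]
            exact ⟨h1a, by omega⟩
          · right
            have h2a : q.2 ≠ a := by
              have := hmin q.1 hq1; omega
            refine ⟨⟨⟨h1a, hq1⟩, ⟨h2a, hq2⟩⟩, hlt, ?_⟩
            intro x hx
            exact hmid x hx.2
        · rintro (h | ⟨⟨⟨h1a, hq1⟩, ⟨h2a, hq2⟩⟩, hlt, hmid⟩)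
          · subst h
            refine ⟨⟨ha, hcmem⟩, hca, ?_⟩
            rintro x hx ⟨u1, u2⟩
            have := hcmin x hx (by omega)
            omega
          · refine ⟨⟨hq1, hq2⟩, hlt, ?_⟩
            intro x hx
            rcases eq_or_ne x a with rfl | hxa
            · have := hmin q.1 hq1; omega
            · exact hmid x ⟨hxa, hx⟩
      have hnotmem : (a, c) ∉ CP (s.erase a) := by
        intro h
        simp only [CP, Finset.mem_filter, Finset.mem_product, Finset.mem_erase] at h
        exact h.1.1.1 rfl
      rw [hinsert, Finset.sum_insert hnotmem]
      have hIH := ih (s.erase a).card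
        (by rw [← hcard]; exact Finset.card_erase_lt_of_mem ha) (s.erase a) rfl
        (fun x hx => hbound x (Finset.mem_erase.1 hx).2) c b hcs hbne
        (fun x hx => hcmin x (Finset.mem_erase.1 hx).2 (Finset.mem_erase.1 hx).1)
        (fun x hx => hmax x (Finset.mem_erase.1 hx).2) hcb'
      rw [hIH]
      exact (hg a c b (hbound a ha).1 hca hcb' (hbound b hb).2).symm

/-- **Invariance of the total angle.** For every triangulation `Δ` of `[n]`
and every vertex `i`, the sum of the noncommutative angles at `i` over all triangles of
`Δ` containing `i` equals `T_i^{i⁻, i⁺}`; in particular it does not depend on `Δ`. -/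
theorem total_angle_invariant (n : ℕ) (hn : 3 ≤ n) (Δ : Set (Fin n × Fin n))
    (hΔ : IsTriangulation Δ) (i : Fin n) :
    ∑ p ∈ Finset.univ.filter (fun p : Fin n × Fin n =>
        p.1 < p.2 ∧ i ≠ p.1 ∧ i ≠ p.2 ∧
        (i, p.1) ∈ Δ ∧ (p.1, i) ∈ Δ ∧ (i, p.2) ∈ Δ ∧ (p.2, i) ∈ Δ ∧
        (p.1, p.2) ∈ Δ ∧ (p.2, p.1) ∈ Δ),
      Tang i p.1 p.2 = Tang i (cpred i) (csucc i) := by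
  classical
  haveI : NeZero n := ⟨by omega⟩
  have h0 : 0 < n := by omega
  set s : Finset ℕ := (Finset.Icc 1 (n-1)).filter (fun m => (i, io i m) ∈ Δ) with hsdef
  have hmem_s : ∀ m, m ∈ s ↔ (1 ≤ m ∧ m ≤ n-1 ∧ (i, io i m) ∈ Δ) := by
    intro m
    simp [hsdef, Finset.mem_Icc, and_assoc]
  have hbd := boundary hn hΔ i
  have h1s : (1:ℕ) ∈ s := (hmem_s 1).2 ⟨le_refl 1, by omega, hbd.1⟩
  have hn1s : n-1 ∈ s := (hmem_s _).2 ⟨by omega, le_refl _, hbd.2⟩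
  have hio_ne : ∀ m, 1 ≤ m → m ≤ n-1 → i ≠ io i m := by
    intro m h1 h2 h
    have := congrArg (rr i) h
    rw [rr_self, rr_io i (by omega)] at this
    omega
  have hadd : ∀ a b c : ℕ, 1 ≤ a → a < b → b < c → c ≤ n-1 →
      Tang i (io i a) (io i c) = Tang i (io i a) (io i b) + Tang i (io i b) (io i c) := by
    intro a b c h1 h2 h3 h4
    apply tang_add
    rw [isCyclicSeq_iff_rr i, rr_self, rr_io i (show a < n by omega),
      rr_io i (show b < n by omega), rr_io i (show c < n by omega)]
    unfold Cyc4
    omega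
  have htel := telescope (fun m m' => Tang i (io i m) (io i m')) (n-1) hadd s.card s rfl
      (fun x hx => by rw [hmem_s] at hx; exact ⟨hx.1, hx.2.1⟩) 1 (n-1) h1s hn1s
      (fun x hx => by rw [hmem_s] at hx; omega)
      (fun x hx => by rw [hmem_s] at hx; exact hx.2.1)
      (by omega)
  have hcsucc : csucc i = io i 1 := by
    apply Fin.ext
    simp [csucc, io, Fin.add_def, Fin.val_natCast, Nat.mod_eq_of_lt (show 1 < n by omega)]
  have hcpred : cpred i = io i (n-1) := by
    apply Fin.ext
    simp [cpred, io, Fin.add_def, Fin.val_natCast, Nat.mod_eq_of_lt (show n-1 < n by omega)]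
  have hne1 : i ≠ io i 1 := hio_ne 1 le_rfl (by omega)
  have hnen : i ≠ io i (n-1) := hio_ne (n-1) (by omega) le_rfl
  have hne1n : io i 1 ≠ io i (n-1) := by
    intro h
    have := congrArg (rr i) h
    rw [rr_io i (show 1 < n by omega), rr_io i (show n-1 < n by omega)] at this
    omega
  have hRHS : Tang i (cpred i) (csucc i) = Tang i (io i 1) (io i (n-1)) := by
    rw [hcpred, hcsucc]
    exact tang_symm hnen hne1 hne1n.symm
  have htel' : (∑ q ∈ CP s, Tang i (io i q.1) (io i q.2)) = Tang i (io i 1) (io i (n-1)) :=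
    htel
  rw [hRHS, ← htel']
  refine Finset.sum_bij'
    (fun p _ => if rr i p.1 < rr i p.2 then (rr i p.1, rr i p.2) else (rr i p.2, rr i p.1))
    (fun q _ => if (io i q.1 : Fin n) < io i q.2 then (io i q.1, io i q.2)
      else (io i q.2, io i q.1))
    ?_ ?_ ?_ ?_ ?_
  · -- forward membership
    intro p hp
    simp only [Finset.mem_filter, Finset.mem_univ, true_and] at hp
    obtain ⟨hlt, hip1, hip2, e1, e2, e3, e4, e5, e6⟩ := hp
    have hp12 : p.1 ≠ p.2 := ne_of_lt hlt
    have hr1 : rr i p.1 ≠ 0 := fun h => hip1 (rr_eq_zero h).symm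
    have hr2 : rr i p.2 ≠ 0 := fun h => hip2 (rr_eq_zero h).symm
    have hrne : rr i p.1 ≠ rr i p.2 := fun h => hp12 (rr_inj h)
    have hb1 := rr_lt i p.1
    have hb2 := rr_lt i p.2
    have hm1 : rr i p.1 ∈ s := (hmem_s _).2 ⟨by omega, by omega, by rw [io_rr]; exact e1⟩
    have hm2 : rr i p.2 ∈ s := (hmem_s _).2 ⟨by omega, by omega, by rw [io_rr]; exact e3⟩
    by_cases hor : rr i p.1 < rr i p.2
    · rw [if_pos hor]
      simp only [CP, Finset.mem_filter, Finset.mem_product]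
      refine ⟨⟨hm1, hm2⟩, hor, ?_⟩
      rintro c hc ⟨u1, u2⟩
      rw [hmem_s] at hc
      exact tri_consec hΔ e1 e5 (show c < n by omega) hc.2.2 u1 u2
    · rw [if_neg hor]
      have hor' : rr i p.2 < rr i p.1 := by omega
      simp only [CP, Finset.mem_filter, Finset.mem_product]
      refine ⟨⟨hm2, hm1⟩, hor', ?_⟩
      rintro c hc ⟨u1, u2⟩
      rw [hmem_s] at hc
      exact tri_consec hΔ e3 e6 (show c < n by omega) hc.2.2 u1 u2
  · -- backward membership
    intro q hq
    simp only [CP, Finset.mem_filter, Finset.mem_product] at hq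
    obtain ⟨⟨hq1, hq2⟩, hqlt, hqcons⟩ := hq
    rw [hmem_s] at hq1 hq2
    have hedge : (io i q.1, io i q.2) ∈ Δ :=
      consec_edge hn hΔ i hq1.1 hq2.2.1 hqlt hq1.2.2 hq2.2.2
        (fun c c1 c2 cm => hqcons c ((hmem_s c).2 ⟨c1, c2, cm⟩))
    have hedge' : (io i q.2, io i q.1) ∈ Δ := mem_symm hΔ hedge
    have hne12 : io i q.1 ≠ io i q.2 := by
      intro h
      have := congrArg (rr i) h
      rw [rr_io i (show q.1 < n by omega), rr_io i (show q.2 < n by omega)] at this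
      omega
    have hneq1 : i ≠ io i q.1 := hio_ne _ hq1.1 hq1.2.1
    have hneq2 : i ≠ io i q.2 := hio_ne _ hq2.1 hq2.2.1
    rcases lt_or_gt_of_ne hne12 with h | h
    · rw [if_pos h]
      simp only [Finset.mem_filter, Finset.mem_univ, true_and]
      exact ⟨h, hneq1, hneq2, hq1.2.2, mem_symm hΔ hq1.2.2, hq2.2.2,
        mem_symm hΔ hq2.2.2, hedge, hedge'⟩
    · rw [if_neg (not_lt.2 h.le)]
      simp only [Finset.mem_filter, Finset.mem_univ, true_and]
      exact ⟨h, hneq2, hneq1, hq2.2.2, mem_symm hΔ hq2.2.2, hq1.2.2,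
        mem_symm hΔ hq1.2.2, hedge', hedge⟩
  · -- left inverse
    intro p hp
    simp only [Finset.mem_filter, Finset.mem_univ, true_and] at hp
    obtain ⟨hlt, -⟩ := hp
    have hi1 : io i (rr i p.1) = p.1 := io_rr i p.1
    have hi2 : io i (rr i p.2) = p.2 := io_rr i p.2
    by_cases hor : rr i p.1 < rr i p.2
    · rw [if_pos hor]
      dsimp only
      rw [hi1, hi2, if_pos hlt]
    · rw [if_neg hor]
      dsimp only
      rw [hi1, hi2, if_neg (not_lt.2 hlt.le)]
  · -- right inverse
    intro q hq
    simp only [CP, Finset.mem_filter, Finset.mem_product] at hq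
    obtain ⟨⟨hq1, hq2⟩, hqlt, -⟩ := hq
    rw [hmem_s] at hq1 hq2
    have hr1 : rr i (io i q.1) = q.1 := rr_io i (by omega)
    have hr2 : rr i (io i q.2) = q.2 := rr_io i (by omega)
    by_cases hor : (io i q.1 : Fin n) < io i q.2
    · rw [if_pos hor]
      dsimp only
      rw [hr1, hr2, if_pos hqlt]
    · rw [if_neg hor]
      dsimp only
      rw [hr1, hr2, if_neg (by omega)]
  · -- summand
    intro p hp
    simp only [Finset.mem_filter, Finset.mem_univ, true_and] at hp
    obtain ⟨hlt, hip1, hip2, -⟩ := hp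
    have hi1 : io i (rr i p.1) = p.1 := io_rr i p.1
    have hi2 : io i (rr i p.2) = p.2 := io_rr i p.2
    by_cases hor : rr i p.1 < rr i p.2
    · rw [if_pos hor]
      dsimp only
      rw [hi1, hi2]
    · rw [if_neg hor]
      dsimp only
      rw [hi1, hi2]
      exact tang_symm hip1 hip2 (ne_of_lt hlt)


end NCPolygon
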